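/- Let a > b be positive integers with gcd(a, b) = 1, let m ≥ 2, set a_i = a^{m−i} b^{i−1} for 1 ≤ i ≤ m, and let S be the numerical semigroup generated by a_1,…,a_m. Then the number of gaps of S (the cardinality of ℤ_{≥0} \ S) equals (a − b + (b − 1)a^m − (a − 1)b^m)/(2(a − b)). -/

import Mathlib

namespace GapsGeo

/-- membership in the semigroup generated by `a^(m-i) b^(i-1)`, `1 ≤ i ≤ m`. -/
def mem (a b m n : ℕ) : Prop :=
  ∃ x : ℕ → ℕ, n = ∑ i ∈ Finset.Icc 1 m, a ^ (m - i) * b ^ (i - 1) * x i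

lemma mem_one (a b n : ℕ) : mem a b 1 n := by
  refine ⟨fun _ => n, ?_⟩
  simp

/-- one step of the gaps construction -/
def stepF (a b m : ℕ) (G : Finset ℕ) : Finset ℕ :=
  (Finset.range a).biUnion (fun t =>
    ((Finset.range (b ^ m * t / a)).image (fun k => b ^ m * t - a * (k + 1))) ∪
    (G.image (fun q => b ^ m * t + a * q)))

def gapsF (a b : ℕ) : ℕ → Finset ℕ
  | 0 => ∅
  | (m+1) => stepF a b m (gapsF a b m)

lemma sum_split (a b m : ℕ) (x : ℕ → ℕ) :
    ∑ i ∈ Finset.Icc 1 (m+1), a ^ (m+1-i) * b ^ (i-1) * x i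
      = a * (∑ i ∈ Finset.Icc 1 m, a ^ (m-i) * b ^ (i-1) * x i) + b ^ m * x (m+1) := by
  rw [Finset.sum_Icc_succ_top (by omega : 1 ≤ m + 1), Finset.mul_sum]
  congr 1
  · refine Finset.sum_congr rfl fun i hi => ?_
    simp only [Finset.mem_Icc] at hi
    have hh : m + 1 - i = (m - i) + 1 := by omega
    rw [hh, pow_succ]; ring
  · simp

lemma mem_add_last (a b m : ℕ) (hm : 1 ≤ m) {s : ℕ} (hs : mem a b m s) (k : ℕ) :
    mem a b m (s + b ^ (m-1) * k) := by
  obtain ⟨x, rfl⟩ := hs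
  refine ⟨Function.update x m (x m + k), ?_⟩
  have hmem : m ∈ Finset.Icc 1 m := by simp [hm]
  rw [← Finset.add_sum_erase _ _ hmem, ← Finset.add_sum_erase _ _ hmem]
  have : ∑ i ∈ (Finset.Icc 1 m).erase m, a ^ (m-i) * b ^ (i-1) * Function.update x m (x m + k) i
      = ∑ i ∈ (Finset.Icc 1 m).erase m, a ^ (m-i) * b ^ (i-1) * x i := by
    refine Finset.sum_congr rfl fun i hi => ?_
    have : i ≠ m := (Finset.mem_erase.mp hi).1
    rw [Function.update_of_ne this]
  rw [this, Function.update_self]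
  simp only [Nat.sub_self, pow_zero, one_mul]
  ring

lemma mem_succ (a b m : ℕ) (ha : 0 < a) (hm : 1 ≤ m) (n : ℕ) :
    mem a b (m+1) n ↔ ∃ t, t < a ∧ ∃ s, mem a b m s ∧ n = a * s + b ^ m * t := by
  constructor
  · rintro ⟨x, rfl⟩
    rw [sum_split]
    set S := ∑ i ∈ Finset.Icc 1 m, a ^ (m-i) * b ^ (i-1) * x i with hS
    refine ⟨x (m+1) % a, Nat.mod_lt _ ha, S + b ^ (m-1) * (b * (x (m+1) / a)), ?_, ?_⟩
    · exact mem_add_last a b m hm ⟨x, rfl⟩ _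
    · have hb1 : b ^ (m-1) * b = b ^ m := by
        rw [← pow_succ]; congr 1; omega
      have := Nat.div_add_mod (x (m+1)) a
      calc a * S + b ^ m * x (m+1)
          = a * S + b ^ m * (a * (x (m+1) / a) + x (m+1) % a) := by rw [Nat.div_add_mod]
        _ = a * (S + b ^ (m-1) * (b * (x (m+1) / a))) + b ^ m * (x (m+1) % a) := by
            rw [← hb1]; ring
  · rintro ⟨t, ht, s, ⟨x, rfl⟩, rfl⟩
    refine ⟨Function.update x (m+1) t, ?_⟩
    rw [sum_split, Function.update_self]
    congr 2
    refine Finset.sum_congr rfl fun i hi => ?_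
    simp only [Finset.mem_Icc] at hi
    rw [Function.update_of_ne (by omega)]

lemma t_inj {a b : ℕ} (h : Nat.Coprime a b) (m : ℕ) {t t' : ℕ} (ht : t < a) (ht' : t' < a)
    (he : b ^ m * t % a = b ^ m * t' % a) : t = t' := by
  have hc : Nat.gcd a (b ^ m) = 1 := Nat.Coprime.pow_right m h
  have h2 : t ≡ t' [MOD a] := Nat.ModEq.cancel_left_of_coprime hc he
  simpa [Nat.ModEq, Nat.mod_eq_of_lt ht, Nat.mod_eq_of_lt ht'] using h2

lemma image_mod {a b : ℕ} (ha : 0 < a) (h : Nat.Coprime a b) (m : ℕ) :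
    (Finset.range a).image (fun t => b ^ m * t % a) = Finset.range a := by
  apply Finset.eq_of_subset_of_card_le
  · intro x hx
    simp only [Finset.mem_image, Finset.mem_range] at hx ⊢
    obtain ⟨t, _, rfl⟩ := hx
    exact Nat.mod_lt _ ha
  · rw [Finset.card_image_of_injOn, Finset.card_range]
    intro t ht t' ht' he
    simp only [Finset.coe_range, Set.mem_Iio] at ht ht'
    exact t_inj h m ht ht' he

lemma t_exists {a b : ℕ} (ha : 0 < a) (h : Nat.Coprime a b) (m n : ℕ) :
    ∃ t, t < a ∧ b ^ m * t % a = n % a := by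
  have hn : n % a ∈ Finset.range a := by
    simp only [Finset.mem_range]
    exact Nat.mod_lt _ ha
  rw [← image_mod ha h m] at hn
  simp only [Finset.mem_image, Finset.mem_range] at hn
  obtain ⟨t, ht, he⟩ := hn
  exact ⟨t, ht, he⟩

lemma mem_stepF {a b m : ℕ} {G : Finset ℕ} {n : ℕ} :
    n ∈ stepF a b m G ↔ ∃ t, t < a ∧
      ((∃ k, k < b ^ m * t / a ∧ b ^ m * t - a * (k + 1) = n) ∨
       (∃ q, q ∈ G ∧ b ^ m * t + a * q = n)) := by
  simp [stepF, Finset.mem_biUnion, Finset.mem_union, Finset.mem_image, Finset.mem_range]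

lemma residue_of_cases {a b m t n : ℕ} (ha : 0 < a) {G : Finset ℕ}
    (hn : (∃ k, k < b ^ m * t / a ∧ b ^ m * t - a * (k + 1) = n) ∨
          (∃ q, q ∈ G ∧ b ^ m * t + a * q = n)) :
    n % a = b ^ m * t % a := by
  rcases hn with ⟨k, hk, rfl⟩ | ⟨q, hq, rfl⟩
  · have hle : (k + 1) * a ≤ b ^ m * t := (Nat.le_div_iff_mul_le ha).mp hk
    have hle' : a * (k + 1) ≤ b ^ m * t := by rw [mul_comm]; exact hle
    conv_rhs => rw [show b ^ m * t = (b ^ m * t - a * (k+1)) + a * (k+1) by omega]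
    rw [Nat.add_mul_mod_self_left]
  · rw [Nat.add_mul_mod_self_left]

lemma gaps_correct {a b : ℕ} (hb : 0 < b) (hab : b < a) (h : Nat.Coprime a b) :
    ∀ m, 1 ≤ m → ∀ n, (n ∈ gapsF a b m ↔ ¬ mem a b m n) := by
  have ha : 0 < a := lt_trans hb hab
  intro m
  induction m with
  | zero => intro hm; omega
  | succ m ih =>
    intro _ n
    by_cases hm : m = 0
    · subst hm
      constructor
      · intro hn
        rw [show gapsF a b 1 = stepF a b 0 (gapsF a b 0) from rfl, mem_stepF] at hn
        obtain ⟨t, ht, hc⟩ := hn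
        rcases hc with ⟨k, hk, _⟩ | ⟨q, hq, _⟩
        · rw [pow_zero, one_mul, Nat.div_eq_of_lt ht] at hk; omega
        · simp [gapsF] at hq
      · intro hmem
        exact absurd (mem_one a b n) hmem
    · have hm1 : 1 ≤ m := by omega
      have IH := ih hm1
      rw [show gapsF a b (m+1) = stepF a b m (gapsF a b m) from rfl, mem_stepF]
      constructor
      · rintro ⟨t, ht, hc⟩ hmem
        rw [mem_succ a b m ha hm1] at hmem
        obtain ⟨t', ht', s, hs, hn⟩ := hmem
        have hres : n % a = b ^ m * t % a := residue_of_cases ha hc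
        have hres' : n % a = b ^ m * t' % a := by
          rw [hn, add_comm, Nat.add_mul_mod_self_left]
        have htt : t = t' := t_inj h m ht ht' (by rw [← hres, ← hres'])
        subst htt
        rcases hc with ⟨k, hk, he⟩ | ⟨q, hq, he⟩
        · have hle : (k + 1) * a ≤ b ^ m * t := (Nat.le_div_iff_mul_le ha).mp hk
          have hle' : a * (k + 1) ≤ b ^ m * t := by rw [mul_comm]; exact hle
          have hpos : 0 < a * (k + 1) := by positivity
          have hpos' : 0 ≤ a * s := Nat.zero_le _
          omega
        · have haq : a * q = a * s := by omega
          have hqs : q = s := Nat.eq_of_mul_eq_mul_left ha haq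
          subst hqs
          exact (IH q).mp hq hs
      · intro hmem
        obtain ⟨t, ht, hres⟩ := t_exists ha h m n
        refine ⟨t, ht, ?_⟩
        by_cases hlt : n < b ^ m * t
        · left
          have hmod : n ≡ b ^ m * t [MOD a] := hres.symm
          have hdvd : a ∣ b ^ m * t - n := (Nat.modEq_iff_dvd' (le_of_lt hlt)).mp hmod
          obtain ⟨d, hd⟩ := hdvd
          have hd1 : 1 ≤ d := by
            rcases Nat.eq_zero_or_pos d with h0 | h1
            · subst h0; omega
            · exact h1
          have had : a * d ≤ b ^ m * t := by omega
          have hdle : d ≤ b ^ m * t / a := (Nat.le_div_iff_mul_le ha).mpr (by rw [Nat.mul_comm d a]; exact had)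
          refine ⟨d - 1, by omega, ?_⟩
          rw [show d - 1 + 1 = d by omega]
          omega
        · right
          push_neg at hlt
          have hmod : b ^ m * t ≡ n [MOD a] := hres
          have hdvd : a ∣ n - b ^ m * t := (Nat.modEq_iff_dvd' hlt).mp hmod
          obtain ⟨q, hq⟩ := hdvd
          have hn : b ^ m * t + a * q = n := by omega
          refine ⟨q, ?_, hn⟩
          rw [IH]
          intro hqmem
          exact hmem ((mem_succ a b m ha hm1 n).mpr ⟨t, ht, q, hqmem, by omega⟩)

lemma card_stepF {a b : ℕ} (ha : 0 < a) (h : Nat.Coprime a b) (m : ℕ) (G : Finset ℕ) :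
    (stepF a b m G).card = (∑ t ∈ Finset.range a, b ^ m * t / a) + a * G.card := by
  rw [stepF, Finset.card_biUnion]
  · have hcards : ∀ t ∈ Finset.range a,
        (((Finset.range (b ^ m * t / a)).image (fun k => b ^ m * t - a * (k + 1))) ∪
          (G.image (fun q => b ^ m * t + a * q))).card = b ^ m * t / a + G.card := by
      intro t _
      rw [Finset.card_union_of_disjoint, Finset.card_image_of_injOn,
        Finset.card_image_of_injOn, Finset.card_range]
      · intro q _ q' _ he
        simp only at he
        exact Nat.eq_of_mul_eq_mul_left ha (by omega)
      · intro k hk k' hk' he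
        simp only [Finset.coe_range, Set.mem_Iio] at hk hk'
        simp only at he
        have h1 : (k + 1) * a ≤ b ^ m * t := (Nat.le_div_iff_mul_le ha).mp hk
        have h2 : (k' + 1) * a ≤ b ^ m * t := (Nat.le_div_iff_mul_le ha).mp hk'
        have h1' : a * (k + 1) ≤ b ^ m * t := by rw [mul_comm]; exact h1
        have h2' : a * (k' + 1) ≤ b ^ m * t := by rw [Nat.mul_comm a (k'+1)]; exact h2
        have : a * (k + 1) = a * (k' + 1) := by omega
        have := Nat.eq_of_mul_eq_mul_left ha this
        omega
      · rw [Finset.disjoint_left]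
        intro x hx1 hx2
        simp only [Finset.mem_image, Finset.mem_range] at hx1 hx2
        obtain ⟨k, hk, rfl⟩ := hx1
        obtain ⟨q, hq, he⟩ := hx2
        have h1 : (k + 1) * a ≤ b ^ m * t := (Nat.le_div_iff_mul_le ha).mp hk
        have h1' : a * (k + 1) ≤ b ^ m * t := by rw [mul_comm]; exact h1
        have hpos : 0 < a * (k + 1) := by positivity
        have hpos' : 0 ≤ a * q := Nat.zero_le _
        omega
    rw [Finset.sum_congr rfl hcards, Finset.sum_add_distrib, Finset.sum_const,
      Finset.card_range, smul_eq_mul]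
  · intro t ht t' ht' hne
    rw [Function.onFun, Finset.disjoint_left]
    intro x hx1 hx2
    simp only [Finset.mem_union, Finset.mem_image, Finset.mem_range] at hx1 hx2
    have hr1 : x % a = b ^ m * t % a := residue_of_cases ha (G := G) (by tauto)
    have hr2 : x % a = b ^ m * t' % a := residue_of_cases ha (G := G) (by tauto)
    exact hne (t_inj h m (Finset.mem_range.mp ht) (Finset.mem_range.mp ht')
      (by rw [← hr1, ← hr2]))

lemma sum_div_mul_two {a b : ℕ} (ha : 0 < a) (hb : 0 < b) (h : Nat.Coprime a b) (m : ℕ) :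
    (∑ t ∈ Finset.range a, b ^ m * t / a) * 2 = (b ^ m - 1) * (a - 1) := by
  have hc1 : 1 ≤ b ^ m := Nat.one_le_pow _ _ hb
  have hmodsum : ∑ t ∈ Finset.range a, b ^ m * t % a = ∑ t ∈ Finset.range a, t := by
    conv_rhs => rw [← image_mod ha h m]
    rw [Finset.sum_image]
    intro x hx y hy he
    exact t_inj h m (Finset.mem_range.mp hx) (Finset.mem_range.mp hy) he
  have h1 : ∑ t ∈ Finset.range a, b ^ m * t
      = a * (∑ t ∈ Finset.range a, b ^ m * t / a) + ∑ t ∈ Finset.range a, b ^ m * t % a := by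
    rw [Finset.mul_sum, ← Finset.sum_add_distrib]
    exact Finset.sum_congr rfl fun t _ => (Nat.div_add_mod _ _).symm
  have h2 : (∑ t ∈ Finset.range a, b ^ m * t) * 2 = b ^ m * (a * (a - 1)) := by
    rw [← Finset.mul_sum, mul_assoc, Finset.sum_range_id_mul_two a]
  have h3 : (∑ t ∈ Finset.range a, t) * 2 = a * (a - 1) := Finset.sum_range_id_mul_two a
  apply Nat.eq_of_mul_eq_mul_left ha
  have hX : b ^ m * (a * (a - 1)) = a * (a - 1) + (b ^ m - 1) * (a * (a - 1)) := by
    conv_lhs => rw [show b ^ m = (b ^ m - 1) + 1 by omega]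
    ring
  have hrhs : a * ((b ^ m - 1) * (a - 1)) = (b ^ m - 1) * (a * (a - 1)) := by ring
  rw [hrhs]
  have := congrArg (· * 2) h1
  simp only [add_mul, mul_assoc] at this
  omega

lemma card_gapsF_succ {a b : ℕ} (ha : 0 < a) (hb : 0 < b) (h : Nat.Coprime a b) (m : ℕ) :
    (gapsF a b (m+1)).card * 2 = a * (gapsF a b m).card * 2 + (b ^ m - 1) * (a - 1) := by
  rw [show gapsF a b (m+1) = stepF a b m (gapsF a b m) from rfl, card_stepF ha h,
    add_mul, sum_div_mul_two ha hb h]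
  ring

end GapsGeo

/-- For coprime positive integers `a > b` and `m ≥ 2`, the numerical semigroup
generated by `a_i = a^{m-i} b^{i-1}` (`1 ≤ i ≤ m`) has exactly
`(a - b + (b-1)a^m - (a-1)b^m)/(2(a-b))` gaps. -/
theorem gaps_count_geometric
    (a b : ℕ) (hb : 0 < b) (hab : b < a) (h : Nat.gcd a b = 1)
    (m : ℕ) (hm : 2 ≤ m) :
    2 * ((a : ℤ) - b) *
        (Set.ncard {n : ℕ | ¬ ∃ x : ℕ → ℕ,
          n = ∑ i ∈ Finset.Icc 1 m, a ^ (m - i) * b ^ (i - 1) * x i} : ℤ)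
      = (a : ℤ) - b + ((b : ℤ) - 1) * (a : ℤ) ^ m - ((a : ℤ) - 1) * (b : ℤ) ^ m := by
  have ha : 0 < a := lt_trans hb hab
  have ha1 : 1 ≤ a := ha
  have hco : Nat.Coprime a b := h
  have key : ∀ k, 1 ≤ k →
      2 * ((a : ℤ) - b) * ((GapsGeo.gapsF a b k).card : ℤ)
        = (a : ℤ) - b + ((b : ℤ) - 1) * (a : ℤ) ^ k - ((a : ℤ) - 1) * (b : ℤ) ^ k := by
    intro k hk
    induction k, hk using Nat.le_induction with
    | base =>
      have he : GapsGeo.gapsF a b 1 = ∅ :=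
        Finset.eq_empty_of_forall_notMem fun n hn =>
          (GapsGeo.gaps_correct hb hab hco 1 le_rfl n).mp hn (GapsGeo.mem_one a b n)
      rw [he]
      simp only [Finset.card_empty, Nat.cast_zero, mul_zero]
      ring
    | succ k hk ih =>
      have hrec := GapsGeo.card_gapsF_succ ha hb hco k
      have hb1 : 1 ≤ b ^ k := Nat.one_le_pow _ _ hb
      zify [hb1, ha1] at hrec
      linear_combination (a : ℤ) * ih + ((a : ℤ) - b) * hrec
  have hset : {n : ℕ | ¬ ∃ x : ℕ → ℕ,
      n = ∑ i ∈ Finset.Icc 1 m, a ^ (m - i) * b ^ (i - 1) * x i}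
      = ↑(GapsGeo.gapsF a b m) := by
    ext n
    simp only [Set.mem_setOf_eq, Finset.mem_coe]
    exact (GapsGeo.gaps_correct hb hab hco m (by omega) n).symm
  rw [hset, Set.ncard_coe_finset]
  exact key m (by omega)
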